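/- The risk of an organization is monotone nondecreasing in the attack budget per unit time: if 0 < B₁ < B₂, then R(G, α, β, δ, γ, T, B₁) ≤ R(G, α, β, δ, γ, T, B₂). -/

import Mathlib

open Set Filter Real Topology

/-- The right-hand side of the SCS model. -/
noncomputable def scsF {N : ℕ} (a : Fin N → Fin N → ℝ) (w x : Fin N → ℝ) (α β δ γ : ℝ)
    (C : Fin N → ℝ) : Fin N → ℝ :=
  fun i => (1 / (δ * w i)) * (α * x i + β * ∑ j, a j i * C j) * (1 - C i) - γ * w i * C i

/-- Barrier lemma: finitely many continuous functions, positive at `0`, with strictly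
positive derivative whenever one of them touches `0` while all are nonnegative,
stay positive on `[0, T]`. -/
lemma barrier_pos {N : ℕ} {T : ℝ} (g : Fin N → ℝ → ℝ)
    (hc : ∀ i, ContinuousOn (g i) (Set.Icc 0 T))
    (h0 : ∀ i, 0 < g i 0)
    (hd : ∀ t ∈ Set.Icc (0:ℝ) T, ∀ i, g i t = 0 → (∀ j, 0 ≤ g j t) →
      ∃ d, HasDerivAt (g i) d t ∧ 0 < d) :
    ∀ t ∈ Set.Icc (0:ℝ) T, ∀ i, 0 < g i t := by
  by_contra hcon
  push_neg at hcon
  obtain ⟨t₀, ht₀, i₀, hi₀⟩ := hcon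
  set S : Set ℝ := ⋃ i, (Set.Icc (0:ℝ) T ∩ (g i) ⁻¹' Set.Iic 0) with hSdef
  have hSclosed : IsClosed S :=
    isClosed_iUnion_of_finite fun i =>
      (hc i).preimage_isClosed_of_isClosed isClosed_Icc isClosed_Iic
  have hSne : S.Nonempty := ⟨t₀, Set.mem_iUnion.2 ⟨i₀, ht₀, hi₀⟩⟩
  have hSbdd : BddBelow S := by
    refine ⟨0, fun t ht => ?_⟩
    obtain ⟨i, hti, -⟩ := Set.mem_iUnion.1 ht
    exact hti.1
  set c := sInf S with hc_def
  have hcS : c ∈ S := hSclosed.csInf_mem hSne hSbdd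
  obtain ⟨i, hcmem⟩ := Set.mem_iUnion.1 hcS
  obtain ⟨hci, hgi⟩ := hcmem
  have hcIcc : c ∈ Set.Icc (0:ℝ) T := hci
  -- positivity strictly before c
  have hbefore : ∀ t, 0 ≤ t → t < c → ∀ j, 0 < g j t := by
    intro t ht htc j
    by_contra h
    push_neg at h
    have : t ∈ S := Set.mem_iUnion.2 ⟨j, ⟨ht, le_trans htc.le hcIcc.2⟩, h⟩
    exact absurd (csInf_le hSbdd this) (not_le.2 htc)
  have hcpos : 0 < c := by
    rcases lt_or_eq_of_le hcIcc.1 with h | h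
    · exact h
    · exact absurd (h ▸ hgi : g i 0 ≤ 0) (not_le.2 (h0 i))
  -- all components nonnegative at c
  have hnonneg : ∀ j, 0 ≤ g j c := by
    intro j
    have hclosed : IsClosed (Set.Icc (0:ℝ) T ∩ (g j) ⁻¹' Set.Ici 0) :=
      (hc j).preimage_isClosed_of_isClosed isClosed_Icc isClosed_Ici
    have hsub : Set.Ico (0:ℝ) c ⊆ Set.Icc (0:ℝ) T ∩ (g j) ⁻¹' Set.Ici 0 := by
      rintro t ⟨ht0, htc⟩
      exact ⟨⟨ht0, le_trans htc.le hcIcc.2⟩, (hbefore t ht0 htc j).le⟩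
    have : c ∈ closure (Set.Ico (0:ℝ) c) := by
      rw [closure_Ico (ne_of_lt hcpos)]
      exact ⟨hcIcc.1, le_refl c⟩
    have := (closure_mono hsub) this
    rw [hclosed.closure_eq] at this
    exact this.2
  have hgi0 : g i c = 0 := le_antisymm hgi (hnonneg i)
  obtain ⟨d, hdd, hdpos⟩ := hd c hcIcc i hgi0 hnonneg
  rw [hasDerivAt_iff_tendsto_slope] at hdd
  have hle : 𝓝[<] c ≤ 𝓝[≠] c := nhdsWithin_mono c fun t ht => ne_of_lt ht
  have ev1 : ∀ᶠ t in 𝓝[<] c, 0 < slope (g i) c t :=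
    (hdd.mono_left hle).eventually (eventually_gt_nhds hdpos)
  have ev2 : ∀ᶠ t in 𝓝[<] c, t ∈ Set.Ioo 0 c :=
    by filter_upwards [Ioo_mem_nhdsLT_of_mem ⟨hcpos, le_refl c⟩] with t ht; exact ht
  obtain ⟨t, ht1, ht2⟩ := (ev1.and ev2).exists
  have hpos := hbefore t ht2.1.le ht2.2 i
  rw [slope_def_field, hgi0] at ht1
  have hden : t - c < 0 := by linarith [ht2.2]
  rcases div_pos_iff.1 ht1 with ⟨h1, h2⟩ | ⟨h1, h2⟩
  · linarith
  · linarith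

/-- A continuous function on `[0,T]` is bounded above. -/
lemma bound_of_continuousOn {T : ℝ} {f : ℝ → ℝ}
    (hf : ContinuousOn f (Set.Icc 0 T)) : ∃ K, 0 ≤ K ∧ ∀ t ∈ Set.Icc (0:ℝ) T, f t ≤ K := by
  obtain ⟨K, hK⟩ := (isCompact_Icc.image_of_continuousOn hf).bddAbove
  exact ⟨max K 0, le_max_right _ _, fun t ht =>
    le_trans (hK (Set.mem_image_of_mem f ht)) (le_max_left _ _)⟩

lemma scs_component_hasDerivAt {N : ℕ} {u : ℝ → Fin N → ℝ} {F : Fin N → ℝ} {t : ℝ}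
    (h : HasDerivAt u F t) (i : Fin N) : HasDerivAt (fun s => u s i) (F i) t := by
  have h2 := (ContinuousLinearMap.proj (R := ℝ) (φ := fun _ : Fin N => ℝ)
    i).hasFDerivAt.comp_hasDerivAt t h
  exact hasDerivAt_pi.1 h i

/-- Invariance: solutions of the SCS model starting below `1` stay below `1`. -/
lemma scs_le_one {N : ℕ} (a : Fin N → Fin N → ℝ) (w x : Fin N → ℝ) {α β δ γ T : ℝ}
    (hγ : 0 < γ) (hw : ∀ i, 0 < w i)
    (u : ℝ → Fin N → ℝ) (h0 : ∀ i, u 0 i ≤ 1)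
    (hder : ∀ t ∈ Set.Icc (0:ℝ) T, HasDerivAt u (scsF a w x α β δ γ (u t)) t) :
    ∀ t ∈ Set.Icc (0:ℝ) T, ∀ i, u t i ≤ 1 := by
  have hcomp : ∀ i, ∀ t ∈ Set.Icc (0:ℝ) T, HasDerivAt (fun s => u s i)
      (scsF a w x α β δ γ (u t) i) t :=
    fun i t ht => scs_component_hasDerivAt (hder t ht) i
  have hcont : ∀ i, ContinuousOn (fun s => u s i) (Set.Icc 0 T) :=
    fun i t ht => ((hcomp i t ht).continuousAt).continuousWithinAt
  set A : Fin N → ℝ → ℝ := fun i t => (1 / (δ * w i)) * (α * x i + β * ∑ j, a j i * u t j)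
    with hA_def
  have hAcont : ∀ i, ContinuousOn (A i) (Set.Icc 0 T) := by
    intro i
    apply ContinuousOn.mul continuousOn_const
    apply ContinuousOn.add continuousOn_const
    apply ContinuousOn.mul continuousOn_const
    exact continuousOn_finset_sum _ fun j _ => continuousOn_const.mul (hcont j)
  obtain ⟨K, hK0, hK⟩ := bound_of_continuousOn (f := fun t => ∑ i, |A i t|)
    (continuousOn_finset_sum _ fun i _ => (hAcont i).abs)
  have hKA : ∀ i, ∀ t ∈ Set.Icc (0:ℝ) T, |A i t| ≤ K := fun i t ht =>
    le_trans (Finset.single_le_sum (f := fun j => |A j t|) (fun j _ => abs_nonneg _)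
      (Finset.mem_univ i)) (hK t ht)
  intro t ht i
  have key : ∀ ε > (0:ℝ), u t i < 1 + ε := by
    intro ε hε
    set ε' : ℝ := ε / Real.exp (K * T) with hε'_def
    have hε' : 0 < ε' := div_pos hε (Real.exp_pos _)
    set g : Fin N → ℝ → ℝ := fun j s => 1 + ε' * Real.exp (K * s) - u s j with hg_def
    have hgpos := barrier_pos (T := T) g
      (fun j => ((continuous_const.add (continuous_const.mul
        (Real.continuous_exp.comp (continuous_const.mul continuous_id)))).continuousOn).sub
        (hcont j))
      (by
        intro j
        show 0 < 1 + ε' * Real.exp (K * 0) - u 0 j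
        rw [mul_zero, Real.exp_zero]
        have := h0 j
        linarith)
      (by
        intro s hs j hj0 _
        have hE : (0:ℝ) < Real.exp (K * s) := Real.exp_pos _
        have hu_eq : u s j = 1 + ε' * Real.exp (K * s) := by
          have : 1 + ε' * Real.exp (K * s) - u s j = 0 := hj0
          linarith
        refine ⟨ε' * (Real.exp (K * s) * K) - scsF a w x α β δ γ (u s) j, ?_, ?_⟩
        · have h1 : HasDerivAt (fun s' : ℝ => K * s') K s := by
            simpa using (hasDerivAt_id s).const_mul K
          have h2 : HasDerivAt (fun s' : ℝ => Real.exp (K * s'))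
              (Real.exp (K * s) * K) s := h1.exp
          have h3 : HasDerivAt (fun s' : ℝ => 1 + ε' * Real.exp (K * s'))
              (ε' * (Real.exp (K * s) * K)) s := (h2.const_mul ε').const_add 1
          exact h3.sub (hcomp j s hs)
        · have hA_abs := hKA j s hs
          rw [abs_le] at hA_abs
          have hscs : scsF a w x α β δ γ (u s) j = A j s * (1 - u s j) - γ * w j * u s j := by
            simp only [scsF, hA_def]
          rw [hscs, hu_eq]
          have hw' := hw j
          nlinarith [mul_nonneg (mul_nonneg hε'.le hE.le)
              (by linarith [hA_abs.1] : 0 ≤ K + A j s),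
            mul_pos hγ hw', mul_pos (mul_pos hγ hw') (mul_pos hε' hE)]) t ht i
    have h1 : u t i < 1 + ε' * Real.exp (K * t) := by
      have : 0 < 1 + ε' * Real.exp (K * t) - u t i := hgpos
      linarith
    have h2 : ε' * Real.exp (K * t) ≤ ε' * Real.exp (K * T) :=
      mul_le_mul_of_nonneg_left
        (Real.exp_le_exp.2 (mul_le_mul_of_nonneg_left ht.2 hK0)) hε'.le
    have h3 : ε' * Real.exp (K * T) = ε :=
      div_mul_cancel₀ ε (Real.exp_ne_zero _)
    linarith
  by_contra hgt
  push_neg at hgt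
  have := key (u t i - 1) (by linarith)
  linarith

set_option maxHeartbeats 2000000 in
/-- Comparison principle: larger attack vector gives (componentwise) larger solution. -/
lemma scs_comparison {N : ℕ} (a : Fin N → Fin N → ℝ) (ha : ∀ i j, a i j = 0 ∨ a i j = 1)
    (w x y : Fin N → ℝ) {α β δ γ T : ℝ}
    (hα : 0 < α) (hβ : 0 < β) (hδ : 0 < δ) (hγ : 0 < γ) (hw : ∀ i, 0 < w i)
    (hxy : ∀ i, x i ≤ y i)
    (u v : ℝ → Fin N → ℝ) (h00 : ∀ i, u 0 i = v 0 i)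
    (hv1 : ∀ t ∈ Set.Icc (0:ℝ) T, ∀ i, v t i ≤ 1)
    (hderu : ∀ t ∈ Set.Icc (0:ℝ) T, HasDerivAt u (scsF a w x α β δ γ (u t)) t)
    (hderv : ∀ t ∈ Set.Icc (0:ℝ) T, HasDerivAt v (scsF a w y α β δ γ (v t)) t) :
    ∀ t ∈ Set.Icc (0:ℝ) T, ∀ i, u t i ≤ v t i := by
  have hcompu : ∀ i, ∀ t ∈ Set.Icc (0:ℝ) T, HasDerivAt (fun s => u s i)
      (scsF a w x α β δ γ (u t) i) t :=
    fun i t ht => scs_component_hasDerivAt (hderu t ht) i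
  have hcompv : ∀ i, ∀ t ∈ Set.Icc (0:ℝ) T, HasDerivAt (fun s => v s i)
      (scsF a w y α β δ γ (v t) i) t :=
    fun i t ht => scs_component_hasDerivAt (hderv t ht) i
  have hcontu : ∀ i, ContinuousOn (fun s => u s i) (Set.Icc 0 T) :=
    fun i t ht => ((hcompu i t ht).continuousAt).continuousWithinAt
  have hcontv : ∀ i, ContinuousOn (fun s => v s i) (Set.Icc 0 T) :=
    fun i t ht => ((hcompv i t ht).continuousAt).continuousWithinAt
  -- the dominating constant
  set Φ : Fin N → ℝ → ℝ := fun i t =>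
    (1 / (δ * w i)) * (β * N) * |1 - v t i| +
      |(1 / (δ * w i)) * (α * x i + β * ∑ j, a j i * u t j)| with hΦ_def
  have hΦcont : ∀ i, ContinuousOn (Φ i) (Set.Icc 0 T) := by
    intro i
    apply ContinuousOn.add
    · exact continuousOn_const.mul ((continuousOn_const.sub (hcontv i)).abs)
    · exact (continuousOn_const.mul (continuousOn_const.add (continuousOn_const.mul
        (continuousOn_finset_sum _ fun j _ => continuousOn_const.mul (hcontu j))))).abs
  have hΦnn : ∀ i t, 0 ≤ Φ i t := by
    intro i t
    simp only [hΦ_def]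
    have h1 : (0:ℝ) ≤ 1 / (δ * w i) := (one_div_pos.mpr (mul_pos hδ (hw i))).le
    have h2 : (0:ℝ) ≤ β * (N:ℝ) := by positivity
    have h3 := abs_nonneg (1 - v t i)
    have h4 := abs_nonneg ((1 / (δ * w i)) * (α * x i + β * ∑ j, a j i * u t j))
    nlinarith [mul_nonneg (mul_nonneg h1 h2) h3]
  obtain ⟨K, hK0, hK⟩ := bound_of_continuousOn (f := fun t => ∑ i, Φ i t)
    (continuousOn_finset_sum _ fun i _ => hΦcont i)
  have hKΦ : ∀ i, ∀ t ∈ Set.Icc (0:ℝ) T, Φ i t ≤ K := fun i t ht =>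
    le_trans (Finset.single_le_sum (f := fun j => Φ j t) (fun j _ => hΦnn j t)
      (Finset.mem_univ i)) (hK t ht)
  intro t ht i
  have key : ∀ ε > (0:ℝ), u t i < v t i + ε := by
    intro ε hε
    set ε' : ℝ := ε / Real.exp (K * T) with hε'_def
    have hε' : 0 < ε' := div_pos hε (Real.exp_pos _)
    set g : Fin N → ℝ → ℝ := fun j s => v s j - u s j + ε' * Real.exp (K * s) with hg_def
    have hgpos := barrier_pos (T := T) g
      (fun j => ((hcontv j).sub (hcontu j)).add
        ((continuous_const.mul (Real.continuous_exp.comp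
          (continuous_const.mul continuous_id))).continuousOn))
      (by
        intro j
        show 0 < v 0 j - u 0 j + ε' * Real.exp (K * 0)
        rw [mul_zero, Real.exp_zero, h00 j]
        linarith)
      (by
        intro s hs j hj0 hjnn
        have hE : (0:ℝ) < Real.exp (K * s) := Real.exp_pos _
        set r : ℝ := ε' * Real.exp (K * s) with hr_def
        have hr : 0 < r := mul_pos hε' hE
        have hv_eq : v s j = u s j - r := by
          have : v s j - u s j + r = 0 := hj0
          linarith
        have hdj : ∀ j', u s j' - v s j' ≤ r := by
          intro j'
          have : 0 ≤ v s j' - u s j' + r := hjnn j'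
          linarith
        refine ⟨(scsF a w y α β δ γ (v s) j - scsF a w x α β δ γ (u s) j) +
          ε' * (Real.exp (K * s) * K), ?_, ?_⟩
        · have h1 : HasDerivAt (fun s' : ℝ => K * s') K s := by
            simpa using (hasDerivAt_id s).const_mul K
          have h3 : HasDerivAt (fun s' : ℝ => ε' * Real.exp (K * s'))
              (ε' * (Real.exp (K * s) * K)) s := h1.exp.const_mul ε'
          exact ((hcompv j s hs).sub (hcompu j s hs)).add h3
        · -- the quantitative one-sided estimate
          have hw' := hw j
          have hc0 : (0:ℝ) < 1 / (δ * w j) := one_div_pos.mpr (mul_pos hδ hw')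
          have hq0 : (0:ℝ) ≤ 1 - v s j := by linarith [hv1 s hs j]
          have hΦj := hKΦ j s hs
          simp only [hΦ_def] at hΦj
          -- bound on the difference of the coupling sums
          have hSdiff : -((N:ℝ) * r) ≤ (∑ k, a k j * v s k) - ∑ k, a k j * u s k := by
            have heq : (∑ k, a k j * v s k) - ∑ k, a k j * u s k
                = ∑ k, a k j * (v s k - u s k) := by
              rw [← Finset.sum_sub_distrib]
              exact Finset.sum_congr rfl fun k _ => by ring
            rw [heq]
            have hterm : ∀ k : Fin N, -r ≤ a k j * (v s k - u s k) := by
              intro k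
              rcases ha k j with h | h
              · rw [h]; simpa using hr.le
              · rw [h, one_mul]; linarith [hdj k]
            calc -((N:ℝ) * r) = ∑ _k : Fin N, -r := by
                  rw [Finset.sum_const, Finset.card_univ, Fintype.card_fin]
                  ring
              _ ≤ ∑ k, a k j * (v s k - u s k) := Finset.sum_le_sum fun k _ => hterm k
          -- the algebraic identity
          have hident : scsF a w y α β δ γ (v s) j - scsF a w x α β δ γ (u s) j =
              1 / (δ * w j) * (1 - v s j) *
                (α * (y j - x j) + β * ((∑ k, a k j * v s k) - ∑ k, a k j * u s k)) +
              (1 / (δ * w j) * (α * x j + β * ∑ k, a k j * u s k)) * r + γ * w j * r := by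
            simp only [scsF]
            rw [hv_eq]
            ring
          have hrK : ε' * (Real.exp (K * s) * K) = r * K := by rw [hr_def]; ring
          rw [hrK, hident]
          -- estimates
          have hbr : -(β * ((N:ℝ) * r)) ≤
              α * (y j - x j) + β * ((∑ k, a k j * v s k) - ∑ k, a k j * u s k) := by
            have h1 : 0 ≤ α * (y j - x j) := mul_nonneg hα.le (by linarith [hxy j])
            have h2 : β * (-((N:ℝ) * r)) ≤
                β * ((∑ k, a k j * v s k) - ∑ k, a k j * u s k) :=
              mul_le_mul_of_nonneg_left hSdiff hβ.le
            nlinarith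
          have hA0 : (0:ℝ) ≤ 1 / (δ * w j) * (1 - v s j) := mul_nonneg hc0.le hq0
          have step1 : (1 / (δ * w j) * (1 - v s j)) * (-(β * ((N:ℝ) * r))) ≤
              (1 / (δ * w j) * (1 - v s j)) *
                (α * (y j - x j) + β * ((∑ k, a k j * v s k) - ∑ k, a k j * u s k)) :=
            mul_le_mul_of_nonneg_left hbr hA0
          have step2 : (1 / (δ * w j)) * (1 - v s j) * (β * ((N:ℝ) * r)) ≤
              (1 / (δ * w j)) * |1 - v s j| * (β * ((N:ℝ) * r)) := by
            have habs : 1 - v s j ≤ |1 - v s j| := le_abs_self _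
            have hnn : (0:ℝ) ≤ (1 / (δ * w j)) * (β * ((N:ℝ) * r)) :=
              mul_nonneg hc0.le (by positivity)
            nlinarith
          have habs2 : -|1 / (δ * w j) * (α * x j + β * ∑ k, a k j * u s k)| * r ≤
              (1 / (δ * w j) * (α * x j + β * ∑ k, a k j * u s k)) * r :=
            mul_le_mul_of_nonneg_right
              (neg_abs_le (1 / (δ * w j) * (α * x j + β * ∑ k, a k j * u s k))) hr.le
          have hKr : (1 / (δ * w j) * (β * (N:ℝ)) * |1 - v s j| +
              |1 / (δ * w j) * (α * x j + β * ∑ k, a k j * u s k)|) * r ≤ K * r :=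
            mul_le_mul_of_nonneg_right hΦj hr.le
          have hγw : (0:ℝ) < γ * w j * r := by positivity
          nlinarith [step1, step2, habs2, hKr, hγw]) t ht i
    have h1 : u t i < v t i + ε' * Real.exp (K * t) := by
      have : 0 < v t i - u t i + ε' * Real.exp (K * t) := hgpos
      linarith
    have h2 : ε' * Real.exp (K * t) ≤ ε' * Real.exp (K * T) :=
      mul_le_mul_of_nonneg_left
        (Real.exp_le_exp.2 (mul_le_mul_of_nonneg_left ht.2 hK0)) hε'.le
    have h3 : ε' * Real.exp (K * T) = ε :=
      div_mul_cancel₀ ε (Real.exp_ne_zero _)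
    linarith
  by_contra hgt
  push_neg at hgt
  have := key (u t i - v t i) (by linarith)
  linarith

/-- The risk is monotone nondecreasing in the attack budget per unit time:
if 0 < B₁ < B₂ then R(G, α, β, δ, γ, T, B₁) ≤ R(G, α, β, δ, γ, T, B₂). -/
theorem risk_monotone_in_budget {N : ℕ} (a : Fin N → Fin N → ℝ)
    (ha : ∀ i j, a i j = 0 ∨ a i j = 1)
    (w : Fin N → ℝ) (α β δ γ T B₁ B₂ : ℝ)
    (hα : 0 < α) (hβ : 0 < β) (hδ : 0 < δ) (hγ : 0 < γ)
    (hw : ∀ i, 0 < w i) (hT : 0 < T) (hB₁ : 0 < B₁) (hB : B₁ < B₂)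
    (C0 : Fin N → ℝ) (h0box : ∀ i, C0 i ∈ Set.Icc (0 : ℝ) 1)
    (sol : (Fin N → ℝ) → ℝ → Fin N → ℝ)
    (hsol : ∀ x : Fin N → ℝ, (∀ i, 0 ≤ x i) → sol x 0 = C0 ∧
      ∀ t ∈ Set.Icc (0 : ℝ) T, HasDerivAt (sol x) (scsF a w x α β δ γ (sol x t)) t) :
    sSup ((fun x => ∫ t in (0:ℝ)..T, ∑ i, w i * sol x t i) ''
        {u : Fin N → ℝ | (∀ i, 0 ≤ u i) ∧ ∑ i, u i = B₁}) ≤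
    sSup ((fun x => ∫ t in (0:ℝ)..T, ∑ i, w i * sol x t i) ''
        {u : Fin N → ℝ | (∀ i, 0 ≤ u i) ∧ ∑ i, u i = B₂}) := by
  rcases Nat.eq_zero_or_pos N with hN | hN
  · subst hN
    have h1 : {u : Fin 0 → ℝ | (∀ i, 0 ≤ u i) ∧ ∑ i, u i = B₁} = ∅ := by
      ext u
      simp only [Set.mem_setOf_eq, Set.mem_empty_iff_false, iff_false, not_and]
      intro _
      simp only [Finset.univ_eq_empty, Finset.sum_empty]
      intro h
      exact absurd h.symm (ne_of_gt hB₁)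
    have h2 : {u : Fin 0 → ℝ | (∀ i, 0 ≤ u i) ∧ ∑ i, u i = B₂} = ∅ := by
      ext u
      simp only [Set.mem_setOf_eq, Set.mem_empty_iff_false, iff_false, not_and]
      intro _
      simp only [Finset.univ_eq_empty, Finset.sum_empty]
      intro h
      exact absurd h.symm (ne_of_gt (lt_trans hB₁ hB))
    rw [h1, h2]
  · -- main case `0 < N`
    have hinv : ∀ x : Fin N → ℝ, (∀ i, 0 ≤ x i) →
        ∀ t ∈ Set.Icc (0:ℝ) T, ∀ i, sol x t i ≤ 1 := by
      intro x hx
      exact scs_le_one a w x hγ hw (sol x)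
        (fun i => by rw [(hsol x hx).1]; exact (h0box i).2) (hsol x hx).2
    have hcont : ∀ x : Fin N → ℝ, (∀ i, 0 ≤ x i) →
        ContinuousOn (fun t => ∑ i, w i * sol x t i) (Set.Icc 0 T) := by
      intro x hx
      exact continuousOn_finset_sum _ fun i _ => continuousOn_const.mul
        (fun t ht => ((scs_component_hasDerivAt ((hsol x hx).2 t ht)
          i).continuousAt).continuousWithinAt)
    have hinteg : ∀ x : Fin N → ℝ, (∀ i, 0 ≤ x i) →
        IntervalIntegrable (fun t => ∑ i, w i * sol x t i) MeasureTheory.volume 0 T := by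
      intro x hx
      apply ContinuousOn.intervalIntegrable
      rw [Set.uIcc_of_le hT.le]
      exact hcont x hx
    have hbound : ∀ x : Fin N → ℝ, (∀ i, 0 ≤ x i) →
        (∫ t in (0:ℝ)..T, ∑ i, w i * sol x t i) ≤ T * ∑ i, w i := by
      intro x hx
      have h1 : (∫ t in (0:ℝ)..T, ∑ i, w i * sol x t i) ≤ ∫ _t in (0:ℝ)..T, ∑ i, w i :=
        intervalIntegral.integral_mono_on hT.le (hinteg x hx) intervalIntegrable_const
          (fun t htt => Finset.sum_le_sum fun i _ =>
            mul_le_of_le_one_right (hw i).le (hinv x hx t htt i))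
      rw [intervalIntegral.integral_const, smul_eq_mul] at h1
      linarith
    have hBdd : BddAbove ((fun x => ∫ t in (0:ℝ)..T, ∑ i, w i * sol x t i) ''
        {u : Fin N → ℝ | (∀ i, 0 ≤ u i) ∧ ∑ i, u i = B₂}) := by
      refine ⟨T * ∑ i, w i, ?_⟩
      rintro _ ⟨x, ⟨hx0, -⟩, rfl⟩
      exact hbound x hx0
    have hu₀mem : (fun i : Fin N => if i = ⟨0, hN⟩ then B₁ else 0) ∈
        {u : Fin N → ℝ | (∀ i, 0 ≤ u i) ∧ ∑ i, u i = B₁} := by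
      constructor
      · intro i
        by_cases h : i = (⟨0, hN⟩ : Fin N) <;> simp [h, hB₁.le]
      · simp
    apply csSup_le (Set.Nonempty.image _ ⟨_, hu₀mem⟩)
    rintro _ ⟨x, ⟨hx0, hxs⟩, rfl⟩
    have hy0 : ∀ i, 0 ≤ (B₂ / B₁) * x i := fun i =>
      mul_nonneg (div_nonneg (by linarith) hB₁.le) (hx0 i)
    have hysum : ∑ i, (B₂ / B₁) * x i = B₂ := by
      rw [← Finset.mul_sum, hxs]
      exact div_mul_cancel₀ B₂ (ne_of_gt hB₁)
    have hr1 : (1:ℝ) ≤ B₂ / B₁ := (one_le_div hB₁).2 hB.le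
    have hxy : ∀ i, x i ≤ (B₂ / B₁) * x i := fun i => by nlinarith [hx0 i]
    have hcomp := scs_comparison a ha w x (fun i => (B₂ / B₁) * x i)
      hα hβ hδ hγ hw hxy (sol x) (sol (fun i => (B₂ / B₁) * x i))
      (fun i => by rw [(hsol x hx0).1, (hsol _ hy0).1])
      (hinv _ hy0) (hsol x hx0).2 (hsol _ hy0).2
    have hLxy : (∫ t in (0:ℝ)..T, ∑ i, w i * sol x t i) ≤
        ∫ t in (0:ℝ)..T, ∑ i, w i * sol (fun i => (B₂ / B₁) * x i) t i := by
      apply intervalIntegral.integral_mono_on hT.le (hinteg x hx0) (hinteg _ hy0)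
      intro t htt
      exact Finset.sum_le_sum fun i _ =>
        mul_le_mul_of_nonneg_left (hcomp t htt i) (hw i).le
    exact le_trans hLxy (le_csSup hBdd ⟨_, ⟨hy0, hysum⟩, rfl⟩)
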